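/- Let βₙ = (1/2)ⁿ and αₙ = √(1 − βₙ²) for n ≥ 1, α₀ = 1, β₀ = 0. For ψ = ψ₊ (λ = 1), the transition operator T_{ψ₊}(x) = s*as x s*as + s*b x bs is weakly mixing: the only bounded solutions x of T_{ψ₊}(x) = μ x with |μ| = 1 are x = 0 when μ ≠ 1 and x ∈ ℂ·1 when μ = 1. -/

import Mathlib

noncomputable section
open ContinuousLinearMap
abbrev H : Type := lp (fun _ : ℕ => ℂ) 2
def e (n : ℕ) : H := lp.single 2 n 1

local notation "⟪" x ", " y "⟫" => @inner ℂ H _ x y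

lemma inner_e_left (n : ℕ) (v : H) : ⟪e n, v⟫ = v n := by
  simp [e, lp.inner_single_left]

lemma e_apply (n m : ℕ) : (e n) m = if m = n then 1 else 0 := by
  simp [e, lp.single_apply, Pi.single_apply]

lemma norm_e (n : ℕ) : ‖e n‖ = 1 := by
  simpa [e] using lp.norm_single (E := fun _ : ℕ => ℂ) (p := 2) (by norm_num) n (1:ℂ)

lemma coords_eq (v w : H) (h : ∀ n, ⟪e n, v⟫ = ⟪e n, w⟫) : v = w := by
  apply lp.ext; funext n
  have := h n; rwa [inner_e_left, inner_e_left] at this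

lemma adj_shift (s : H →L[ℂ] H) (hs : ∀ n, s (e n) = e (n + 1)) (n : ℕ) :
    adjoint s (e (n+1)) = e n := by
  apply coords_eq
  intro m
  rw [adjoint_inner_right, hs, inner_e_left, inner_e_left, e_apply, e_apply]
  simp

lemma inner_e_e (m n : ℕ) : ⟪e m, e n⟫ = if m = n then 1 else 0 := by
  rw [inner_e_left, e_apply]

lemma adj_diag (a : H →L[ℂ] H) (γ : ℕ → ℝ) (ha : ∀ n, a (e n) = (γ n : ℂ) • e n)
    (n : ℕ) : adjoint a (e n) = (γ n : ℂ) • e n := by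
  apply coords_eq
  intro m
  rw [adjoint_inner_right, ha, inner_smul_left, inner_smul_right, inner_e_e]
  by_cases h : m = n
  · subst h; simp
  · simp [h, Ne.symm h]

lemma op_zero (x : H →L[ℂ] H) (h : ∀ m n, ⟪e m, x (e n)⟫ = 0) : x = 0 := by
  have hadj : ∀ m, adjoint x (e m) = 0 := by
    intro m
    apply coords_eq
    intro n
    rw [adjoint_inner_right, inner_zero_right, ← inner_conj_symm, h]
    simp
  ext1 v
  change x v = 0
  apply coords_eq
  intro m
  rw [← adjoint_inner_left, hadj, inner_zero_left, inner_zero_right]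

lemma coeff_rec (α β : ℕ → ℝ) (s a b : H →L[ℂ] H)
    (hs : ∀ n, s (e n) = e (n + 1))
    (ha : ∀ n, a (e n) = (α n : ℂ) • e n)
    (hb : ∀ n, b (e n) = (β n : ℂ) • e n)
    (μ : ℂ) (x : H →L[ℂ] H)
    (hx : (adjoint s ∘L a ∘L s) ∘L x ∘L (adjoint s ∘L a ∘L s)
        + (adjoint s ∘L b) ∘L x ∘L (b ∘L s) = μ • x)
    (m n : ℕ) :
    (α (m+1) * α (n+1) : ℂ) * ⟪e m, x (e n)⟫
      + (β (m+1) * β (n+1) : ℂ) * ⟪e (m+1), x (e (n+1))⟫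
      = μ * ⟪e m, x (e n)⟫ := by
  have h1 : ∀ w : H, ⟪e m, adjoint s w⟫ = ⟪e (m+1), w⟫ := fun w => by
    rw [adjoint_inner_right, hs]
  have h2 : ∀ (k : ℕ) (w : H), ⟪e k, a w⟫ = (α k : ℂ) * ⟪e k, w⟫ := fun k w => by
    rw [← adjoint_inner_left, adj_diag a α ha, inner_smul_left, Complex.conj_ofReal]
  have h3 : ∀ (k : ℕ) (w : H), ⟪e k, b w⟫ = (β k : ℂ) * ⟪e k, w⟫ := fun k w => by
    rw [← adjoint_inner_left, adj_diag b β hb, inner_smul_left, Complex.conj_ofReal]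
  have h4 : ∀ w : H, ⟪e (m+1), s w⟫ = ⟪e m, w⟫ := fun w => by
    rw [← adjoint_inner_left, adj_shift s hs]
  have H1 := congrArg (fun T : H →L[ℂ] H => ⟪e m, T (e n)⟫) hx
  simp only [add_apply, comp_apply, smul_apply] at H1
  rw [inner_add_right, inner_smul_right] at H1
  rw [hs, ha, map_smul, adj_shift s hs, map_smul x, map_smul s, map_smul a,
    map_smul (adjoint s), inner_smul_right, h1, h2 (m+1), h4] at H1
  rw [hb, map_smul x, map_smul b, map_smul (adjoint s), inner_smul_right,
    h1, h3 (m+1)] at H1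
  rw [← H1]; ring

lemma coeff_bound (x : H →L[ℂ] H) (m n : ℕ) : ‖⟪e m, x (e n)⟫‖ ≤ ‖x‖ := by
  calc ‖⟪e m, x (e n)⟫‖ ≤ ‖e m‖ * ‖x (e n)‖ := norm_inner_le_norm _ _
    _ = ‖x (e n)‖ := by rw [norm_e, one_mul]
    _ ≤ ‖x‖ * ‖e n‖ := x.le_opNorm _
    _ = ‖x‖ := by rw [norm_e, mul_one]

lemma vanish (f : ℕ → ℂ) (B r : ℝ) (hr : 1 < r) (hb : ∀ j, ‖f j‖ ≤ B)
    (hrec : ∀ j, r * ‖f j‖ ≤ ‖f (j+1)‖) : f 0 = 0 := by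
  by_contra h
  have h0 : 0 < ‖f 0‖ := norm_pos_iff.mpr h
  have hstep : ∀ j, r ^ j * ‖f 0‖ ≤ ‖f j‖ := by
    intro j
    induction j with
    | zero => simp
    | succ k ih =>
      calc r ^ (k+1) * ‖f 0‖ = r * (r ^ k * ‖f 0‖) := by ring
        _ ≤ r * ‖f k‖ := by
            have := mul_le_mul_of_nonneg_left ih (le_of_lt (lt_trans one_pos hr))
            linarith
        _ ≤ ‖f (k+1)‖ := hrec k
  obtain ⟨j, hj⟩ := pow_unbounded_of_one_lt (B / ‖f 0‖) hr
  have : B < r ^ j * ‖f 0‖ := by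
    rw [div_lt_iff₀ h0] at hj; linarith
  have := lt_of_lt_of_le this (le_trans (hstep j) (hb j))
  exact lt_irrefl _ this

lemma amgm (u v : ℝ) (hu1 : u ^ 2 ≤ 1) (hv1 : v ^ 2 ≤ 1) :
    Real.sqrt (1 - u ^ 2) * Real.sqrt (1 - v ^ 2) ≤ 1 - (u ^ 2 + v ^ 2) / 2 := by
  have h1 : (0:ℝ) ≤ 1 - u ^ 2 := by linarith
  have h2 : (0:ℝ) ≤ 1 - v ^ 2 := by linarith
  have hs1 := Real.sq_sqrt h1
  have hs2 := Real.sq_sqrt h2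
  have hn1 := Real.sqrt_nonneg (1 - u ^ 2)
  have hn2 := Real.sqrt_nonneg (1 - v ^ 2)
  nlinarith [sq_nonneg (Real.sqrt (1 - u ^ 2) - Real.sqrt (1 - v ^ 2))]

lemma powB (p d : ℕ) (hd : 1 ≤ d) :
    (1 + ((1:ℝ)/2) ^ (d+1)) * (((1:ℝ)/2) ^ p * ((1:ℝ)/2) ^ (p+d))
      ≤ ((((1:ℝ)/2) ^ p) ^ 2 + (((1:ℝ)/2) ^ (p+d)) ^ 2) / 2 := by
  have ht : (0:ℝ) ≤ ((1:ℝ)/2) ^ p := by positivity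
  have hs : ((1:ℝ)/2) ^ d ≤ 1/2 := by
    calc ((1:ℝ)/2) ^ d ≤ ((1:ℝ)/2) ^ 1 := by
          apply pow_le_pow_of_le_one (by norm_num) (by norm_num) hd
      _ = 1/2 := by norm_num
  rw [pow_add, pow_add, pow_succ]
  set t := ((1:ℝ)/2) ^ p with hT
  set s := ((1:ℝ)/2) ^ d with hS
  have hs0 : 0 ≤ s := by positivity
  nlinarith [mul_nonneg (mul_nonneg ht ht) (by linarith : (0:ℝ) ≤ 1/2 - s)]

lemma step_bound (α β : ℕ → ℝ)
    (hβn : ∀ n, 1 ≤ n → β n = (1 / 2) ^ n)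
    (hαn : ∀ n, 1 ≤ n → α n = Real.sqrt (1 - β n ^ 2))
    (μ : ℂ) (hμ : ‖μ‖ = 1) (p d : ℕ) (hp : 1 ≤ p) (hd : 1 ≤ d) (q : ℕ)
    (hq : q = p + d) :
    (1 + ((1:ℝ)/2) ^ (d+1)) * (β p * β q) ≤ ‖μ - ((α p * α q : ℝ) : ℂ)‖ := by
  subst hq
  set q := p + d with hqdef
  have hq1 : 1 ≤ q := by omega
  have hbp := hβn p hp
  have hbq := hβn q hq1
  have hbp2 : β p ^ 2 ≤ 1 := by
    rw [hbp]
    have h1 : ((1:ℝ)/2) ^ p ≤ 1 := pow_le_one₀ (by norm_num) (by norm_num)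
    have h2 : (0:ℝ) ≤ ((1:ℝ)/2) ^ p := by positivity
    nlinarith
  have hbq2 : β q ^ 2 ≤ 1 := by
    rw [hbq]
    have h1 : ((1:ℝ)/2) ^ q ≤ 1 := pow_le_one₀ (by norm_num) (by norm_num)
    have h2 : (0:ℝ) ≤ ((1:ℝ)/2) ^ q := by positivity
    nlinarith
  have hA : α p * α q ≤ 1 - (β p ^ 2 + β q ^ 2) / 2 := by
    rw [hαn p hp, hαn q hq1]
    exact amgm (β p) (β q) hbp2 hbq2
  have h0 : 0 ≤ α p * α q := by
    rw [hαn p hp, hαn q hq1]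
    exact mul_nonneg (Real.sqrt_nonneg _) (Real.sqrt_nonneg _)
  have hnorm : 1 - α p * α q ≤ ‖μ - ((α p * α q : ℝ) : ℂ)‖ := by
    have h1 : ‖μ‖ - ‖((α p * α q : ℝ) : ℂ)‖ ≤ ‖μ - ((α p * α q : ℝ) : ℂ)‖ :=
      norm_sub_norm_le _ _
    rw [hμ, Complex.norm_real, Real.norm_eq_abs, abs_of_nonneg h0] at h1
    exact h1
  have hB := powB p d hd
  calc (1 + ((1:ℝ)/2) ^ (d+1)) * (β p * β q)
      = (1 + ((1:ℝ)/2) ^ (d+1)) * (((1:ℝ)/2) ^ p * ((1:ℝ)/2) ^ (p+d)) := by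
        rw [hbp, hbq]
    _ ≤ ((((1:ℝ)/2) ^ p) ^ 2 + (((1:ℝ)/2) ^ (p+d)) ^ 2) / 2 := hB
    _ = (β p ^ 2 + β q ^ 2) / 2 := by rw [hbp, hbq]
    _ ≤ 1 - α p * α q := by linarith
    _ ≤ _ := hnorm

set_option maxHeartbeats 1000000 in
/-- for βₙ = (1/2)ⁿ, αₙ = √(1 − βₙ²) (n ≥ 1), α₀ = 1, β₀ = 0, the
transition operator T_{ψ₊}(x) = s*as x s*as + s*b x bs is weakly mixing: the only
bounded solutions of T_{ψ₊}(x) = μ x with |μ| = 1 are x = 0 if μ ≠ 1 and x ∈ ℂ·1 if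
μ = 1. -/
theorem psi_plus_weakly_mixing_special (α β : ℕ → ℝ)
    (hα0 : α 0 = 1) (hβ0 : β 0 = 0)
    (hβn : ∀ n, 1 ≤ n → β n = (1 / 2) ^ n)
    (hαn : ∀ n, 1 ≤ n → α n = Real.sqrt (1 - β n ^ 2))
    (s a b : H →L[ℂ] H)
    (hs : ∀ n, s (e n) = e (n + 1))
    (ha : ∀ n, a (e n) = (α n : ℂ) • e n)
    (hb : ∀ n, b (e n) = (β n : ℂ) • e n)
    (μ : ℂ) (hμ : ‖μ‖ = 1) (x : H →L[ℂ] H)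
    (hx : (adjoint s ∘L a ∘L s) ∘L x ∘L (adjoint s ∘L a ∘L s)
        + (adjoint s ∘L b) ∘L x ∘L (b ∘L s) = μ • x) :
    (μ ≠ 1 → x = 0) ∧ (μ = 1 → ∃ c : ℂ, x = c • 1) := by
  have hrec := coeff_rec α β s a b hs ha hb μ x hx
  have hβpos : ∀ k : ℕ, 0 < β (k+1) := by
    intro k; rw [hβn (k+1) (by omega)]; positivity
  -- rearranged recursion: w * X' = (μ - αα) * X
  have hrec2 : ∀ m n : ℕ,
      ((β (m+1) * β (n+1) : ℝ) : ℂ) * ⟪e (m+1), x (e (n+1))⟫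
        = (μ - ((α (m+1) * α (n+1) : ℝ) : ℂ)) * ⟪e m, x (e n)⟫ := by
    intro m n
    have E := hrec m n
    push_cast
    push_cast at E
    linear_combination E
  -- norms of the recursion
  have hnrec : ∀ m n : ℕ,
      (β (m+1) * β (n+1)) * ‖⟪e (m+1), x (e (n+1))⟫‖
        = ‖μ - ((α (m+1) * α (n+1) : ℝ) : ℂ)‖ * ‖⟪e m, x (e n)⟫‖ := by
    intro m n
    have := congrArg norm (hrec2 m n)
    rw [norm_mul, norm_mul, Complex.norm_real, Real.norm_eq_abs,
      abs_of_pos (mul_pos (hβpos m) (hβpos n))] at this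
    exact this
  -- off-diagonal vanishing
  have hoff : ∀ m n : ℕ, m ≠ n → ⟪e m, x (e n)⟫ = 0 := by
    have key : ∀ (m d : ℕ), 1 ≤ d →
        ⟪e m, x (e (m+d))⟫ = 0 ∧ ⟪e (m+d), x (e m)⟫ = 0 := by
      intro m d hd
      set r := 1 + ((1:ℝ)/2) ^ (d+1) with hrdef
      have hr1 : 1 < r := by
        have : (0:ℝ) < ((1:ℝ)/2) ^ (d+1) := by positivity
        rw [hrdef]; linarith
      have hstep : ∀ j : ℕ,
          r * (β (m+j+1) * β (m+d+j+1)) ≤ ‖μ - ((α (m+j+1) * α (m+d+j+1) : ℝ) : ℂ)‖ :=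
        fun j => step_bound α β hβn hαn μ hμ (m+j+1) d (by omega) hd (m+d+j+1) (by omega)
      have hgrow : ∀ (f : ℕ → ℂ),
          (∀ j, (β (m+j+1) * β (m+d+j+1)) * ‖f (j+1)‖
              = ‖μ - ((α (m+j+1) * α (m+d+j+1) : ℝ) : ℂ)‖ * ‖f j‖) →
          (∀ j, ‖f j‖ ≤ ‖x‖) → f 0 = 0 := by
        intro f hf hfb
        apply vanish f ‖x‖ r hr1 hfb
        intro j
        have h1 := hf j
        have h2 := hstep j
        have hbp := mul_pos (hβpos (m+j)) (hβpos (m+d+j))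
        have h3 : r * (β (m+j+1) * β (m+d+j+1)) * ‖f j‖
            ≤ ‖μ - ((α (m+j+1) * α (m+d+j+1) : ℝ) : ℂ)‖ * ‖f j‖ :=
          mul_le_mul_of_nonneg_right h2 (norm_nonneg _)
        rw [← h1] at h3
        have h4 : (β (m+j+1) * β (m+d+j+1)) * (r * ‖f j‖)
            ≤ (β (m+j+1) * β (m+d+j+1)) * ‖f (j+1)‖ := by
          calc (β (m+j+1) * β (m+d+j+1)) * (r * ‖f j‖)
              = r * (β (m+j+1) * β (m+d+j+1)) * ‖f j‖ := by ring
            _ ≤ _ := h3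
        exact le_of_mul_le_mul_left h4 hbp
      constructor
      · have := hgrow (fun j => ⟪e (m+j), x (e (m+d+j))⟫)
          (fun j => by
            have h := hnrec (m+j) (m+d+j)
            simpa [Nat.add_assoc, Nat.add_comm, Nat.add_left_comm] using h)
          (fun j => coeff_bound x _ _)
        simpa using this
      · have := hgrow (fun j => ⟪e (m+d+j), x (e (m+j))⟫)
          (fun j => by
            have h := hnrec (m+d+j) (m+j)
            rw [mul_comm (β (m+d+j+1)) (β (m+j+1)), mul_comm (α (m+d+j+1)) (α (m+j+1))] at h
            simpa [Nat.add_assoc, Nat.add_comm, Nat.add_left_comm] using h)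
          (fun j => coeff_bound x _ _)
        simpa using this
    intro m n hmn
    rcases Nat.lt_or_ge m n with h | h
    · have := (key m (n - m) (by omega)).1
      have hn : m + (n - m) = n := by omega
      rwa [hn] at this
    · have hlt : n < m := by omega
      have := (key n (m - n) (by omega)).2
      have hn : n + (m - n) = m := by omega
      rwa [hn] at this
  -- diagonal recursion
  have hb2 : ∀ m : ℕ, β (m+1) ^ 2 ≤ 1 := by
    intro m
    rw [hβn (m+1) (by omega)]
    have h1 : ((1:ℝ)/2) ^ (m+1) ≤ 1 := pow_le_one₀ (by norm_num) (by norm_num)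
    have h2 : (0:ℝ) ≤ ((1:ℝ)/2) ^ (m+1) := by positivity
    nlinarith
  have hdiag : ∀ m : ℕ, ⟪e (m+1), x (e (m+1))⟫
      = (1 + (μ - 1) * (4:ℂ)^(m+1)) * ⟪e m, x (e m)⟫ := by
    intro m
    have E := hrec m m
    have hα2 : (α (m+1) : ℂ) * (α (m+1) : ℂ) = 1 - (β (m+1) : ℂ) * (β (m+1) : ℂ) := by
      have hr : α (m+1) * α (m+1) = 1 - β (m+1) * β (m+1) := by
        rw [hαn (m+1) (by omega)]
        rw [Real.mul_self_sqrt (by nlinarith [hb2 m])]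
        ring
      have := congrArg (fun t : ℝ => (t : ℂ)) hr
      push_cast at this
      exact this
    have hw4 : (β (m+1) : ℂ) * (β (m+1) : ℂ) * (4:ℂ)^(m+1) = 1 := by
      have hr : (β (m+1) * β (m+1) * 4^(m+1) : ℝ) = 1 := by
        rw [hβn (m+1) (by omega), ← mul_pow, ← mul_pow]
        norm_num
      have := congrArg (fun t : ℝ => (t : ℂ)) hr
      push_cast at this
      exact this
    rw [hα2] at E
    linear_combination (4:ℂ)^(m+1) * E
      - (⟪e (m+1), x (e (m+1))⟫ - ⟪e m, x (e m)⟫) * hw4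
  constructor
  · -- μ ≠ 1 : x = 0
    intro hμ1
    have hμd : (0:ℝ) < ‖μ - 1‖ := by
      rw [norm_pos_iff]; exact sub_ne_zero.mpr hμ1
    have hcne : ∀ m : ℕ, (1 + (μ - 1) * (4:ℂ)^(m+1)) ≠ 0 := by
      intro m hc
      have h4pos : (0:ℝ) < (4:ℝ)^(m+1) := by positivity
      have h4ne : ((4:ℂ)^(m+1)) ≠ 0 := by norm_num
      have hμeq : μ = 1 - ((4:ℂ)^(m+1))⁻¹ := by
        field_simp
        linear_combination hc
      have hcast : (1 : ℂ) - ((4:ℂ)^(m+1))⁻¹ = (((1 - ((4:ℝ)^(m+1))⁻¹ : ℝ)) : ℂ) := by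
        push_cast; ring
      rw [hμeq, hcast] at hμ
      have hinv : (0:ℝ) < ((4:ℝ)^(m+1))⁻¹ := by positivity
      have hinvle : ((4:ℝ)^(m+1))⁻¹ ≤ 1 := by
        rw [inv_le_one_iff₀]; right
        calc (1:ℝ) ≤ 4 ^ 1 := by norm_num
          _ ≤ 4 ^ (m+1) := by apply pow_le_pow_right₀ <;> [norm_num; omega]
      rw [Complex.norm_real, Real.norm_eq_abs, abs_of_nonneg (by linarith)] at hμ
      linarith
    obtain ⟨M, hM⟩ := pow_unbounded_of_one_lt (3 / ‖μ - 1‖) (by norm_num : (1:ℝ) < 4)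
    have hbig : ∀ m : ℕ, M ≤ m → 2 ≤ ‖1 + (μ - 1) * (4:ℂ)^(m+1)‖ := by
      intro m hm
      have hz : ‖(μ - 1) * (4:ℂ)^(m+1)‖ = ‖μ - 1‖ * (4:ℝ)^(m+1) := by
        rw [norm_mul, norm_pow]
        norm_num
      have hmono : (4:ℝ)^M ≤ (4:ℝ)^(m+1) := by
        apply pow_le_pow_right₀ <;> [norm_num; omega]
      have h3 : 3 ≤ ‖μ - 1‖ * (4:ℝ)^(m+1) := by
        rw [div_lt_iff₀ hμd] at hM
        calc (3:ℝ) ≤ ‖μ - 1‖ * (4:ℝ)^M := le_of_lt (by linarith)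
          _ ≤ _ := by
            apply mul_le_mul_of_nonneg_left hmono (le_of_lt hμd)
      have htri : ‖(μ - 1) * (4:ℂ)^(m+1)‖ - ‖(1:ℂ)‖
          ≤ ‖1 + (μ - 1) * (4:ℂ)^(m+1)‖ := by
        have := norm_sub_norm_le ((μ - 1) * (4:ℂ)^(m+1)) (-1)
        simpa [sub_neg_eq_add, add_comm] using this
      rw [hz] at htri
      simp only [norm_one] at htri
      linarith
    have htail : ∀ m : ℕ, M ≤ m → ⟪e m, x (e m)⟫ = 0 := by
      intro m hm
      have := vanish (fun j => ⟪e (m+j), x (e (m+j))⟫) ‖x‖ 2 (by norm_num)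
        (fun j => coeff_bound x _ _)
        (fun j => by
          have hd := hdiag (m+j)
          have hn := congrArg norm hd
          rw [norm_mul] at hn
          have h2 := hbig (m+j) (by omega)
          calc 2 * ‖⟪e (m+j), x (e (m+j))⟫‖
              ≤ ‖1 + (μ - 1) * (4:ℂ)^(m+j+1)‖ * ‖⟪e (m+j), x (e (m+j))⟫‖ :=
                mul_le_mul_of_nonneg_right h2 (norm_nonneg _)
            _ = ‖⟪e (m+j+1), x (e (m+j+1))⟫‖ := hn.symm)
      simpa using this
    have hzero : ∀ m : ℕ, ⟪e m, x (e m)⟫ = 0 := by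
      have hdown : ∀ k : ℕ, ⟪e (M - k), x (e (M - k))⟫ = 0 := by
        intro k
        induction k with
        | zero => simpa using htail M le_rfl
        | succ k ih =>
          by_cases hk : M ≤ k
          · have h : M - (k+1) = M - k := by omega
            rw [h]; exact ih
          · have hsucc : M - (k+1) + 1 = M - k := by omega
            have hd := hdiag (M - (k+1))
            have hcc := hcne (M - (k+1))
            rw [hsucc] at hd hcc
            rw [ih] at hd
            exact ((mul_eq_zero.mp hd.symm).resolve_left hcc)
      intro m
      rcases le_or_gt M m with h | h
      · exact htail m h
      · have hmm : m = M - (M - m) := by omega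
        rw [hmm]; exact hdown (M - m)
    apply op_zero
    intro m n
    by_cases h : m = n
    · subst h; exact hzero m
    · exact hoff m n h
  · -- μ = 1 : x = c • 1
    intro hμ1
    subst hμ1
    refine ⟨⟪e 0, x (e 0)⟫, ?_⟩
    have hdiagall : ∀ m : ℕ, ⟪e m, x (e m)⟫ = ⟪e 0, x (e 0)⟫ := by
      intro m
      induction m with
      | zero => rfl
      | succ k ih =>
        rw [hdiag k, ih]
        simp
    have h0 : x - ⟪e 0, x (e 0)⟫ • (1 : H →L[ℂ] H) = 0 := by
      apply op_zero
      intro m n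
      have happ : (x - ⟪e 0, x (e 0)⟫ • (1 : H →L[ℂ] H)) (e n)
          = x (e n) - ⟪e 0, x (e 0)⟫ • (e n) := by
        simp [sub_apply, smul_apply, one_apply]
      rw [happ, inner_sub_right, inner_smul_right, inner_e_e]
      by_cases h : m = n
      · subst h
        rw [if_pos rfl, hdiagall m]
        ring
      · rw [if_neg h, hoff m n h]
        ring
    have := sub_eq_zero.mp h0
    exact this
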